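/- Let Δ be a group, η: Δ → ℤ a ℤ-grading of Δ, and y ∈ η⁻¹(1). Then ⟨y⟩ ∩ η⁻¹(0) = {1}, the centralizer Z_Δ(y) is the internal direct product of the infinite cyclic subgroup ⟨y⟩ and the finite subgroup Z_Δ(y) ∩ η⁻¹(0), and consequently every irreducible complex representation τ of Z_Δ(y) ∩ η⁻¹(0) admits a unique extension to a representation of Z_Δ(y) on which y acts as the identity; this extension is irreducible. -/

import Mathlib

open CategoryTheory

/-- An element centralizes itself. -/
lemma mem_centralizer_self {Δ : Type*} [Group Δ] (y : Δ) :
    y ∈ Subgroup.centralizer ({y} : Set Δ) :=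
  Subgroup.mem_centralizer_iff.mpr (by rintro g rfl; rfl)

lemma commute_of_mem_centralizer {Δ : Type} [Group Δ] {y z : Δ}
    (hz : z ∈ Subgroup.centralizer ({y} : Set Δ)) : Commute y z :=
  Subgroup.mem_centralizer_iff.mp hz y rfl

/-- Subrepresentation on an invariant submodule. -/
def subRep {G V : Type} [Group G] [AddCommGroup V] [Module ℂ V]
    (σ : Representation ℂ G V) (U : Submodule ℂ V)
    (hU : ∀ g, ∀ x ∈ U, σ g x ∈ U) : Representation ℂ G U where
  toFun g := (σ g).restrict (hU g)
  map_one' := by ext x; simp [LinearMap.restrict_apply]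
  map_mul' g h := by ext x; simp [LinearMap.restrict_apply]

/-- Simplicity transfers along a surjective group homomorphism. -/
lemma simple_comp {G H V : Type} [Group G] [Group H]
    [AddCommGroup V] [Module ℂ V] [FiniteDimensional ℂ V]
    (f : G →* H) (hf : Function.Surjective f)
    (τ : Representation ℂ H V) (ρ' : Representation ℂ G V)
    (hρ : ∀ g, ρ' g = τ (f g)) (hτ : Simple (FDRep.of τ)) :
    Simple (FDRep.of ρ') := by
  haveI := hτ
  constructor
  intro W i imono
  constructor
  · intro hiso h0
    have h1 : 𝟙 (FDRep.of ρ') = 0 := by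
      have := congrArg (fun φ => inv i ≫ φ) h0
      simpa using this
    have hV : (𝟙 (FGModuleCat.of ℂ V) : _ ⟶ _) = 0 := congrArg Action.Hom.hom h1
    have h2 : 𝟙 (FDRep.of τ) = 0 := Action.hom_ext _ _ hV
    exact id_nonzero (FDRep.of τ) h2
  · intro h0
    set e : (W.V : Type) →ₗ[ℂ] V := i.hom.hom.hom with he
    have hcomm : ∀ (g : G) (x : W.V), e (W.ρ g x) = ρ' g (e x) := by
      intro g x
      have := congrArg (fun (φ : W.V ⟶ (FDRep.of ρ').V) => φ x) (i.comm g)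
      exact this
    -- injectivity of e
    have hK : ∀ g, ∀ x ∈ LinearMap.ker e, W.ρ g x ∈ LinearMap.ker e := by
      intro g x hx
      simp only [LinearMap.mem_ker] at hx ⊢
      exact (hcomm g x).trans (by rw [hx, map_zero])
    have hinj : Function.Injective e := by
      rw [← LinearMap.ker_eq_bot]
      by_contra hne
      let jK : FDRep.of (subRep W.ρ (LinearMap.ker e) hK) ⟶ W :=
        { hom := ⟨ModuleCat.ofHom (LinearMap.ker e).subtype⟩
          comm := fun g => by ext x; rfl }
      have hzero : jK ≫ i = 0 := by
        apply Action.hom_ext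
        ext x
        exact x.2
      have : jK = 0 := by
        rw [← cancel_mono i, hzero, Limits.zero_comp]
      have hsub : (LinearMap.ker e).subtype = 0 := congrArg (fun f => f.hom.hom.hom) this
      apply hne
      rw [eq_bot_iff]
      intro x hx
      have : (⟨x, hx⟩ : LinearMap.ker e).val = 0 := congrArg (fun φ => φ ⟨x, hx⟩) hsub
      simpa using this
    -- surjectivity of e
    have hU : ∀ h, ∀ x ∈ LinearMap.range e, τ h x ∈ LinearMap.range e := by
      intro h x hx
      obtain ⟨g, rfl⟩ := hf h
      obtain ⟨w, rfl⟩ := hx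
      exact ⟨W.ρ g w, by rw [hcomm g w, hρ]⟩
    let jU : FDRep.of (subRep τ (LinearMap.range e) hU) ⟶ FDRep.of τ :=
      { hom := ⟨ModuleCat.ofHom (LinearMap.range e).subtype⟩
        comm := fun h => by ext x; rfl }
    haveI : Mono jU := by
      apply Functor.mono_of_mono_map (Action.forget _ _)
      change Mono jU.hom
      apply ConcreteCategory.mono_of_injective
      exact Subtype.val_injective
    have hjU : jU ≠ 0 := by
      intro hz
      apply h0
      have hsub : (LinearMap.range e).subtype = 0 := congrArg (fun f => f.hom.hom.hom) hz
      apply Action.hom_ext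
      show i.hom = 0
      ext w
      have : (⟨e w, ⟨w, rfl⟩⟩ : LinearMap.range e).val = 0 :=
        congrArg (fun φ => φ ⟨e w, ⟨w, rfl⟩⟩) hsub
      simpa using this
    haveI : IsIso jU := (hτ.mono_isIso_iff_nonzero jU).mpr hjU
    have hsurj : Function.Surjective e := by
      intro v
      haveI : IsIso jU.hom := by
        have : IsIso ((Action.forget _ _).map jU) := inferInstance
        exact this
      have hbij := ConcreteCategory.bijective_of_isIso
        (jU.hom : (_ : FGModuleCat ℂ) ⟶ _)
      obtain ⟨u, hu⟩ := hbij.2 v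
      have hu' : ((show ↥(LinearMap.range e) from u) : V) = v := hu
      obtain ⟨w, hw⟩ := (show ↥(LinearMap.range e) from u).2
      exact ⟨w, hw.trans hu'⟩
    -- build the inverse
    let eqv := LinearEquiv.ofBijective e ⟨hinj, hsurj⟩
    have hecoe : ∀ w, eqv w = e w := fun _ => rfl
    let ih : FDRep.of ρ' ⟶ W :=
      { hom := ⟨ModuleCat.ofHom (eqv.symm.toLinearMap : (_ : Type) →ₗ[ℂ] _)⟩
        comm := fun g => by
          ext v
          show eqv.symm (ρ' g v) = W.ρ g (eqv.symm v)
          apply hinj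
          show e _ = e _
          rw [← hecoe, LinearEquiv.apply_symm_apply, hcomm g,
            ← hecoe, LinearEquiv.apply_symm_apply] }
    refine ⟨ih, ?_, ?_⟩
    · apply Action.hom_ext
      ext w
      show eqv.symm (e w) = w
      rw [← hecoe, LinearEquiv.symm_apply_apply]
    · apply Action.hom_ext
      ext v
      show e (eqv.symm v) = v
      rw [← hecoe, LinearEquiv.apply_symm_apply]

/-- The projection from the centralizer of `y` onto the degree-zero part. -/
def gradingProj {Δ : Type} [Group Δ] (η : Δ →* Multiplicative ℤ) (y : Δ)
    (hy : η y = Multiplicative.ofAdd 1) :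
    ↥(Subgroup.centralizer ({y} : Set Δ)) →*
      ↥(Subgroup.centralizer ({y} : Set Δ) ⊓ η.ker) :=
  MonoidHom.mk'
    (fun z => ⟨y ^ (-(η z.1).toAdd) * z.1,
      ⟨Subgroup.mul_mem _ (Subgroup.zpow_mem _ (mem_centralizer_self y) _) z.2, by
        have hpow : η (y ^ (-(η z.1).toAdd)) = Multiplicative.ofAdd (-(η z.1).toAdd) := by
          rw [map_zpow, hy]
          apply Multiplicative.toAdd.injective
          simp
        show η (y ^ (-(η z.1).toAdd) * z.1) = 1
        rw [map_mul, hpow]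
        apply Multiplicative.toAdd.injective
        simp⟩⟩)
    (by
      intro z w
      apply Subtype.ext
      show y ^ (-(η (z.1 * w.1)).toAdd) * (z.1 * w.1) =
        y ^ (-(η z.1).toAdd) * z.1 * (y ^ (-(η w.1).toAdd) * w.1)
      have hab : (η (z.1 * w.1)).toAdd = (η z.1).toAdd + (η w.1).toAdd := by
        rw [map_mul]; rfl
      have hc : z.1 * y ^ (-(η w.1).toAdd) = y ^ (-(η w.1).toAdd) * z.1 :=
        ((commute_of_mem_centralizer z.2).zpow_left _).eq.symm
      rw [hab, neg_add, zpow_add, mul_assoc (y ^ (-(η z.1).toAdd)) z.1,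
        ← mul_assoc z.1, hc, mul_assoc, mul_assoc])

lemma gradingProj_inclusion {Δ : Type} [Group Δ] (η : Δ →* Multiplicative ℤ) (y : Δ)
    (hy : η y = Multiplicative.ofAdd 1)
    (t : ↥(Subgroup.centralizer ({y} : Set Δ) ⊓ η.ker)) :
    gradingProj η y hy (Subgroup.inclusion inf_le_left t) = t := by
  apply Subtype.ext
  show y ^ (-(η ((Subgroup.inclusion (inf_le_left) t : _)).1).toAdd) * _ = t.1
  have hk : η (t.1 : Δ) = 1 := t.2.2
  simp [Subgroup.coe_inclusion, hk]

lemma gradingProj_surjective {Δ : Type} [Group Δ] (η : Δ →* Multiplicative ℤ) (y : Δ)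
    (hy : η y = Multiplicative.ofAdd 1) :
    Function.Surjective (gradingProj η y hy) := fun t =>
  ⟨Subgroup.inclusion inf_le_left t, gradingProj_inclusion η y hy t⟩

lemma gradingProj_y {Δ : Type} [Group Δ] (η : Δ →* Multiplicative ℤ) (y : Δ)
    (hy : η y = Multiplicative.ofAdd 1) :
    gradingProj η y hy ⟨y, mem_centralizer_self y⟩ = 1 := by
  apply Subtype.ext
  show y ^ (-(η y).toAdd) * y = 1
  rw [hy]
  simp

lemma gradingProj_decomp {Δ : Type} [Group Δ] (η : Δ →* Multiplicative ℤ) (y : Δ)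
    (hy : η y = Multiplicative.ofAdd 1) (z : ↥(Subgroup.centralizer ({y} : Set Δ))) :
    z = (⟨y, mem_centralizer_self y⟩ : ↥(Subgroup.centralizer ({y} : Set Δ))) ^ (η z.1).toAdd
        * Subgroup.inclusion inf_le_left (gradingProj η y hy z) := by
  apply Subtype.ext
  show z.1 = y ^ (η z.1).toAdd * (y ^ (-(η z.1).toAdd) * z.1)
  rw [← mul_assoc, ← zpow_add, add_neg_cancel, zpow_zero, one_mul]

/-- **Statement 9.** Let `Δ` be a group, `η : Δ → ℤ` a ℤ-grading of `Δ` (surjective with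
finite kernel), and `y ∈ η⁻¹(1)`.  Then `⟨y⟩ ∩ η⁻¹(0) = {1}`, the centralizer `Z_Δ(y)` is
the internal direct product of the cyclic subgroup `⟨y⟩` and the finite subgroup
`Z_Δ(y) ∩ η⁻¹(0)` (every element of `Z_Δ(y)` is uniquely `y ^ k * t` with `k ∈ ℤ` and
`t ∈ Z_Δ(y) ∩ η⁻¹(0)`), and consequently every irreducible complex representation `τ` of
`Z_Δ(y) ∩ η⁻¹(0)` admits a unique extension to a representation of `Z_Δ(y)` on which `y`
acts as the identity; this extension is irreducible. -/
theorem centralizer_direct_product_and_unique_extension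
    {Δ : Type} [Group Δ] (η : Δ →* Multiplicative ℤ)
    (hsurj : Function.Surjective η) (hker : Finite η.ker)
    (y : Δ) (hy : η y = Multiplicative.ofAdd 1) :
    (Subgroup.zpowers y ⊓ η.ker = ⊥) ∧
    (∀ z ∈ Subgroup.centralizer ({y} : Set Δ),
        ∃ (k : ℤ) (t : Δ), t ∈ Subgroup.centralizer ({y} : Set Δ) ⊓ η.ker ∧
          z = y ^ k * t) ∧
    (∀ (k k' : ℤ) (t t' : Δ),
        t ∈ Subgroup.centralizer ({y} : Set Δ) ⊓ η.ker →
        t' ∈ Subgroup.centralizer ({y} : Set Δ) ⊓ η.ker →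
        y ^ k * t = y ^ k' * t' → k = k' ∧ t = t') ∧
    (∀ (V : Type) [AddCommGroup V] [Module ℂ V] [FiniteDimensional ℂ V]
        (τ : Representation ℂ ↥(Subgroup.centralizer ({y} : Set Δ) ⊓ η.ker) V),
        Simple (FDRep.of τ) →
        (∃! ρ' : Representation ℂ ↥(Subgroup.centralizer ({y} : Set Δ)) V,
            (∀ t : ↥(Subgroup.centralizer ({y} : Set Δ) ⊓ η.ker),
              ρ' (Subgroup.inclusion inf_le_left t) = τ t) ∧
            ρ' ⟨y, mem_centralizer_self y⟩ = 1) ∧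
        (∀ ρ' : Representation ℂ ↥(Subgroup.centralizer ({y} : Set Δ)) V,
            ((∀ t : ↥(Subgroup.centralizer ({y} : Set Δ) ⊓ η.ker),
              ρ' (Subgroup.inclusion inf_le_left t) = τ t) ∧
            ρ' ⟨y, mem_centralizer_self y⟩ = 1) →
            Simple (FDRep.of ρ'))) := by
  have hpow : ∀ k : ℤ, η (y ^ k) = Multiplicative.ofAdd k := fun k => by
    rw [map_zpow, hy]
    apply Multiplicative.toAdd.injective
    simp
  refine ⟨?_, ?_, ?_, ?_⟩
  · rw [Subgroup.eq_bot_iff_forall]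
    rintro x ⟨hx1, hx2⟩
    obtain ⟨k, rfl⟩ := Subgroup.mem_zpowers_iff.mp hx1
    have h1 : Multiplicative.ofAdd k = 1 := (hpow k).symm.trans hx2
    have hk : k = 0 := by simpa using congrArg Multiplicative.toAdd h1
    rw [hk, zpow_zero]
  · intro z hz
    refine ⟨(η z).toAdd, y ^ (-(η z).toAdd) * z,
      ⟨Subgroup.mul_mem _ (Subgroup.zpow_mem _ (mem_centralizer_self y) _) hz, ?_⟩,
      by rw [← mul_assoc, ← zpow_add, add_neg_cancel, zpow_zero, one_mul]⟩
    show η (y ^ (-(η z).toAdd) * z) = 1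
    rw [map_mul, hpow]
    apply Multiplicative.toAdd.injective
    simp
  · intro k k' t t' ht ht' heq
    have hηt : η t = 1 := ht.2
    have hηt' : η t' = 1 := ht'.2
    have hk : k = k' := by
      have h2 := congrArg η heq
      rw [map_mul, map_mul, hpow, hpow, hηt, hηt', mul_one, mul_one] at h2
      simpa using congrArg Multiplicative.toAdd h2
    subst hk
    exact ⟨rfl, mul_left_cancel heq⟩
  · intro V _ _ _ τ hτ
    have key : ∀ (ρ' : Representation ℂ ↥(Subgroup.centralizer ({y} : Set Δ)) V),
        (∀ t, ρ' (Subgroup.inclusion inf_le_left t) = τ t) →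
        ρ' ⟨y, mem_centralizer_self y⟩ = 1 →
        ∀ z, ρ' z = τ (gradingProj η y hy z) := by
      intro ρ' h1 h2 z
      set x : ↥(Subgroup.centralizer ({y} : Set Δ)) := ⟨y, mem_centralizer_self y⟩ with hx
      have hpos : ∀ n : ℕ, ρ' (x ^ n) = 1 := fun n => by
        rw [map_pow, h2, one_pow]
      have hz1 : ∀ k : ℤ, ρ' (x ^ k) = 1 := by
        intro k
        rcases k with n | n
        · simpa using hpos n
        · have h3 := hpos (n + 1)
          have h4 : x ^ (Int.negSucc n) * x ^ (n + 1 : ℕ) = 1 := by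
            rw [zpow_negSucc, inv_mul_cancel]
          calc ρ' (x ^ (Int.negSucc n))
              = ρ' (x ^ (Int.negSucc n)) * ρ' (x ^ (n + 1 : ℕ)) := by rw [h3, mul_one]
            _ = ρ' (x ^ (Int.negSucc n) * x ^ (n + 1 : ℕ)) := (map_mul ρ' _ _).symm
            _ = 1 := by rw [h4, map_one]
      conv_lhs => rw [gradingProj_decomp η y hy z]
      rw [map_mul, ← hx, hz1, one_mul, h1]
    constructor
    · refine ⟨(τ.comp (gradingProj η y hy) : _ →* _), ⟨fun t => ?_, ?_⟩, fun ρ' h => ?_⟩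
      · show τ (gradingProj η y hy (Subgroup.inclusion inf_le_left t)) = τ t
        rw [gradingProj_inclusion]
      · show τ (gradingProj η y hy ⟨y, mem_centralizer_self y⟩) = 1
        rw [gradingProj_y, map_one]
      · exact MonoidHom.ext fun z => key ρ' h.1 h.2 z
    · intro ρ' h
      exact simple_comp (gradingProj η y hy) (gradingProj_surjective η y hy) τ ρ'
        (key ρ' h.1 h.2) hτ
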